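/- If A = K − L = U − V = X − Y are three weak regular splittings of a nonsingular monotone matrix A (A⁻¹ ≥ 0), then ρ(X⁻¹YU⁻¹VK⁻¹L) < 1. -/

import Mathlib

open Matrix

/-- `X` is the group inverse of `A`. -/
def IsGroupInv {n : ℕ} (A X : Matrix (Fin n) (Fin n) ℝ) : Prop :=
  A * X * A = A ∧ X * A * X = X ∧ A * X = X * A

/-- Spectral radius of a real matrix: sup of moduli of its complex eigenvalues. -/
noncomputable def specRad {n : ℕ} (A : Matrix (Fin n) (Fin n) ℝ) : ℝ :=
  sSup ((fun z : ℂ => ‖z‖) '' spectrum ℂ (A.map (algebraMap ℝ ℂ)))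

/-- `A = U - V` is a proper splitting: `R(U) = R(A)` and `N(U) = N(A)`. -/
def ProperSplitting {n : ℕ} (A U V : Matrix (Fin n) (Fin n) ℝ) : Prop :=
  A = U - V ∧ LinearMap.range U.mulVecLin = LinearMap.range A.mulVecLin ∧
    LinearMap.ker U.mulVecLin = LinearMap.ker A.mulVecLin

/-- Entrywise nonnegativity of a matrix. -/
def Nonneg {n : ℕ} (M : Matrix (Fin n) (Fin n) ℝ) : Prop :=
  ∀ i j, 0 ≤ M i j

section Aux

open Finset

lemma nonneg_mul {n : ℕ} {M N : Matrix (Fin n) (Fin n) ℝ} (hM : Nonneg M) (hN : Nonneg N) :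
    Nonneg (M * N) := fun i j => by
  rw [Matrix.mul_apply]
  exact Finset.sum_nonneg fun c _ => mul_nonneg (hM i c) (hN c j)

lemma nonneg_add {n : ℕ} {M N : Matrix (Fin n) (Fin n) ℝ} (hM : Nonneg M) (hN : Nonneg N) :
    Nonneg (M + N) := fun i j => add_nonneg (hM i j) (hN i j)

lemma nonneg_pow {n : ℕ} {M : Matrix (Fin n) (Fin n) ℝ} (hM : Nonneg M) (k : ℕ) :
    Nonneg (M ^ k) := by
  induction k with
  | zero => intro i j; simp [Matrix.one_apply]; positivity
  | succ k ih => rw [pow_succ]; exact nonneg_mul ih hM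

attribute [local instance] Matrix.linftyOpNormedRing Matrix.linftyOpNormedAlgebra

lemma matrix_norm_le_sum {n : ℕ} (M : Matrix (Fin n) (Fin n) ℂ) :
    ‖M‖ ≤ ∑ i, ∑ j, ‖M i j‖ := by
  have h : ((Finset.univ : Finset (Fin n)).sup fun i => ∑ j, ‖M i j‖₊) ≤
      ∑ i, ∑ j, ‖M i j‖₊ :=
    Finset.sup_le fun i _ =>
      Finset.single_le_sum (f := fun i => ∑ j, ‖M i j‖₊) (fun i _ => zero_le)
        (Finset.mem_univ i)
  calc ‖M‖ = (((Finset.univ : Finset (Fin n)).sup fun i => ∑ j, ‖M i j‖₊ : NNReal) : ℝ) :=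
        Matrix.linfty_opNorm_def M
    _ ≤ ((∑ i, ∑ j, ‖M i j‖₊ : NNReal) : ℝ) := NNReal.coe_le_coe.mpr h
    _ = ∑ i, ∑ j, ‖M i j‖ := by push_cast; rfl

/-- If the powers of a real matrix tend to zero entrywise, its spectral radius is
less than one. -/
lemma specRad_lt_one_of_pow_tendsto {n : ℕ} (T : Matrix (Fin n) (Fin n) ℝ)
    (h : ∀ a b, Filter.Tendsto (fun j : ℕ => (T ^ j) a b) Filter.atTop (nhds 0)) :
    specRad T < 1 := by
  rcases Nat.eq_zero_or_pos n with hn | hn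
  · subst hn
    have hsub : Subsingleton (Matrix (Fin 0) (Fin 0) ℂ) :=
      ⟨fun M N => by ext i; exact absurd i.2 (by omega)⟩
    have hspec : spectrum ℂ (T.map (algebraMap ℝ ℂ)) = ∅ := by
      ext z
      simp only [Set.mem_empty_iff_false, iff_false]
      intro hz
      exact hz (@isUnit_of_subsingleton _ _ hsub _)
    rw [specRad, hspec, Set.image_empty, Real.sSup_empty]
    norm_num
  haveI : Nonempty (Fin n) := ⟨⟨0, hn⟩⟩
  haveI : CompleteSpace (Matrix (Fin n) (Fin n) ℂ) :=
    inferInstance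
  -- the total entrywise sum of |T^j| tends to 0
  have hsum : Filter.Tendsto (fun j : ℕ => ∑ a, ∑ b, ‖(T ^ j) a b‖)
      Filter.atTop (nhds 0) := by
    have : Filter.Tendsto (fun j : ℕ => ∑ a, ∑ b, ‖(T ^ j) a b‖)
        Filter.atTop (nhds (∑ a : Fin n, ∑ b : Fin n, (0 : ℝ))) := by
      refine tendsto_finset_sum _ fun a _ => tendsto_finset_sum _ fun b _ => ?_
      simpa using (h a b).norm
    simpa using this
  -- choose j ≥ 1 with small norm
  have hev : ∀ᶠ j : ℕ in Filter.atTop,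
      (∑ a, ∑ b, ‖(T ^ j) a b‖) < 1 ∧ 1 ≤ j :=
    (hsum.eventually_lt_const one_pos).and (Filter.eventually_ge_atTop 1)
  obtain ⟨j, hj1, hj2⟩ := hev.exists
  set B := T.map (algebraMap ℝ ℂ) with hB
  have hBpow : B ^ j = (T ^ j).map (algebraMap ℝ ℂ) := by
    rw [hB, ← RingHom.mapMatrix_apply, ← RingHom.mapMatrix_apply, ← map_pow]
  set c := ‖B ^ j‖ with hc
  have hc0 : 0 ≤ c := norm_nonneg _
  have hc1 : c < 1 := by
    rw [hc, hBpow]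
    refine lt_of_le_of_lt (matrix_norm_le_sum _) ?_
    calc ∑ a, ∑ b, ‖((T ^ j).map (algebraMap ℝ ℂ)) a b‖
        = ∑ a, ∑ b, ‖(T ^ j) a b‖ := by
          refine Finset.sum_congr rfl fun a _ => Finset.sum_congr rfl fun b _ => ?_
          simp [Matrix.map_apply, Complex.norm_real]
      _ < 1 := hj1
  set r := c ^ ((j : ℝ)⁻¹) with hr
  have hjne : (j : ℝ) ≠ 0 := by positivity
  have hr1 : r < 1 := by
    rcases eq_or_lt_of_le hc0 with hc0' | hc0'
    · rw [hr, ← hc0', Real.zero_rpow (by positivity)]; norm_num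
    · exact Real.rpow_lt_one hc0 hc1 (by positivity)
  have hr0 : 0 ≤ r := Real.rpow_nonneg hc0 _
  have key : ∀ z ∈ spectrum ℂ B, ‖z‖ ≤ r := by
    intro z hz
    have hzj : z ^ j ∈ spectrum ℂ (B ^ j) := by
      have h1 := spectrum.subset_polynomial_aeval B (Polynomial.X ^ j : Polynomial ℂ)
        ⟨z, hz, rfl⟩
      simpa using h1
    have hnorm : ‖z ^ j‖ ≤ c := spectrum.norm_le_norm_of_mem hzj
    have habs : ‖z‖ ^ j ≤ c := by
      rw [← norm_pow]; exact hnorm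
    have : ‖z‖ = (‖z‖ ^ j) ^ ((j : ℝ)⁻¹) := by
      rw [← Real.rpow_natCast ‖z‖ j, ← Real.rpow_mul (norm_nonneg _),
        mul_inv_cancel₀ hjne, Real.rpow_one]
    rw [this, hr]
    exact Real.rpow_le_rpow (by positivity) habs (by positivity)
  have : specRad T ≤ r := by
    apply Real.sSup_le _ hr0
    rintro x ⟨z, hz, rfl⟩
    exact key z hz
  exact lt_of_le_of_lt this hr1

end Aux

theorem three_step_convergence_nonsingular {n : ℕ}
    (A K L U V X Y : Matrix (Fin n) (Fin n) ℝ)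
    (hAunit : IsUnit A) (hAi : Nonneg A⁻¹)
    (hsK : A = K - L) (hKunit : IsUnit K)
    (hKi : Nonneg K⁻¹) (hKL : Nonneg (K⁻¹ * L))
    (hsU : A = U - V) (hUunit : IsUnit U)
    (hUi : Nonneg U⁻¹) (hUV : Nonneg (U⁻¹ * V))
    (hsX : A = X - Y) (hXunit : IsUnit X)
    (hXi : Nonneg X⁻¹) (hXY : Nonneg (X⁻¹ * Y)) :
    specRad (X⁻¹ * Y * U⁻¹ * V * K⁻¹ * L) < 1 := by
  classical
  have hXd := (Matrix.isUnit_iff_isUnit_det X).mp hXunit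
  have hUd := (Matrix.isUnit_iff_isUnit_det U).mp hUunit
  have hKd := (Matrix.isUnit_iff_isUnit_det K).mp hKunit
  have hAd := (Matrix.isUnit_iff_isUnit_det A).mp hAunit
  have h1 : X⁻¹ * Y = 1 - X⁻¹ * A := by
    rw [hsX, Matrix.mul_sub, Matrix.nonsing_inv_mul X hXd]; noncomm_ring
  have h2 : U⁻¹ * V = 1 - U⁻¹ * A := by
    rw [hsU, Matrix.mul_sub, Matrix.nonsing_inv_mul U hUd]; noncomm_ring
  have h3 : K⁻¹ * L = 1 - K⁻¹ * A := by
    rw [hsK, Matrix.mul_sub, Matrix.nonsing_inv_mul K hKd]; noncomm_ring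
  set T := X⁻¹ * Y * U⁻¹ * V * K⁻¹ * L with hT
  set P := X⁻¹ + X⁻¹ * Y * U⁻¹ + X⁻¹ * Y * (U⁻¹ * V) * K⁻¹ with hP
  have hTnn : Nonneg T := by
    have e2 : T = (X⁻¹ * Y) * ((U⁻¹ * V) * (K⁻¹ * L)) := by rw [hT]; noncomm_ring
    rw [e2]; exact nonneg_mul hXY (nonneg_mul hUV hKL)
  have hPA : P * A = 1 - T := by
    have e : P * A = X⁻¹ * A + (X⁻¹ * Y) * (U⁻¹ * A) + (X⁻¹ * Y) * ((U⁻¹ * V) * (K⁻¹ * A)) := by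
      rw [hP]; noncomm_ring
    have e2 : T = (X⁻¹ * Y) * ((U⁻¹ * V) * (K⁻¹ * L)) := by rw [hT]; noncomm_ring
    rw [e, e2, h1, h2, h3]; noncomm_ring
  have hPX : Nonneg (P - X⁻¹) := by
    have e : P - X⁻¹ = (X⁻¹ * Y) * U⁻¹ + (X⁻¹ * Y) * (U⁻¹ * V) * K⁻¹ := by rw [hP]; abel
    rw [e]
    exact nonneg_add (nonneg_mul hXY hUi) (nonneg_mul (nonneg_mul hXY hUV) hKi)
  have hgeom : ∀ k : ℕ, (∑ j ∈ Finset.range k, T ^ j) * P = A⁻¹ - T ^ k * A⁻¹ := by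
    intro k
    have hg : (∑ j ∈ Finset.range k, T ^ j) * (1 - T) = 1 - T ^ k := by
      have hgs := geom_sum_mul T k
      calc (∑ j ∈ Finset.range k, T ^ j) * (1 - T)
          = -((∑ j ∈ Finset.range k, T ^ j) * (T - 1)) := by noncomm_ring
        _ = 1 - T ^ k := by rw [hgs]; noncomm_ring
    have hmain : (∑ j ∈ Finset.range k, T ^ j) * P * A = (1 - T ^ k) := by
      rw [mul_assoc, hPA, hg]
    calc (∑ j ∈ Finset.range k, T ^ j) * P
        = (∑ j ∈ Finset.range k, T ^ j) * P * A * A⁻¹ := by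
          rw [mul_assoc _ A A⁻¹, Matrix.mul_nonsing_inv A hAd, mul_one]
      _ = (1 - T ^ k) * A⁻¹ := by rw [hmain]
      _ = A⁻¹ - T ^ k * A⁻¹ := by noncomm_ring
  -- entrywise convergence of T^j * X⁻¹ to 0
  have htend : ∀ a b, Filter.Tendsto (fun j : ℕ => (T ^ j * X⁻¹) a b)
      Filter.atTop (nhds 0) := by
    intro a b
    have hpos : ∀ j : ℕ, 0 ≤ (T ^ j * X⁻¹) a b :=
      fun j => (nonneg_mul (nonneg_pow hTnn j) hXi) a b
    have hbound : ∀ k : ℕ, ∑ j ∈ Finset.range k, (T ^ j * X⁻¹) a b ≤ A⁻¹ a b := by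
      intro k
      have step1 : ∀ j : ℕ, (T ^ j * X⁻¹) a b ≤ (T ^ j * P) a b := by
        intro j
        have hnn : Nonneg (T ^ j * (P - X⁻¹)) := nonneg_mul (nonneg_pow hTnn j) hPX
        have e : T ^ j * (P - X⁻¹) = T ^ j * P - T ^ j * X⁻¹ := by noncomm_ring
        have := hnn a b
        rw [e, Matrix.sub_apply] at this
        linarith
      have step2 : ∑ j ∈ Finset.range k, (T ^ j * P) a b ≤ A⁻¹ a b := by
        have e : ∑ j ∈ Finset.range k, (T ^ j * P) a b
            = ((∑ j ∈ Finset.range k, T ^ j) * P) a b := by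
          rw [Finset.sum_mul, Matrix.sum_apply]
        rw [e, hgeom k, Matrix.sub_apply]
        have := (nonneg_mul (nonneg_pow hTnn k) hAi) a b
        linarith
      calc ∑ j ∈ Finset.range k, (T ^ j * X⁻¹) a b
          ≤ ∑ j ∈ Finset.range k, (T ^ j * P) a b :=
            Finset.sum_le_sum fun j _ => step1 j
        _ ≤ A⁻¹ a b := step2
    exact (summable_of_sum_range_le hpos hbound).tendsto_atTop_zero
  -- entrywise convergence of T^j to 0
  have htend2 : ∀ a b, Filter.Tendsto (fun j : ℕ => (T ^ j) a b)
      Filter.atTop (nhds 0) := by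
    intro a b
    have e : ∀ j : ℕ, (T ^ j) a b = ∑ c, (T ^ j * X⁻¹) a c * X c b := by
      intro j
      conv_lhs => rw [show T ^ j = (T ^ j * X⁻¹) * X by
        rw [mul_assoc, Matrix.nonsing_inv_mul X hXd, mul_one]]
      rw [Matrix.mul_apply]
    simp only [e]
    have : Filter.Tendsto (fun j : ℕ => ∑ c, (T ^ j * X⁻¹) a c * X c b)
        Filter.atTop (nhds (∑ c : Fin n, (0 : ℝ) * X c b)) :=
      tendsto_finset_sum _ fun c _ => (htend a c).mul_const (X c b)
    simpa using this
  exact specRad_lt_one_of_pow_tendsto T htend2
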